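/- Let p be an odd prime and let q ∈ ℚ_p satisfy |q−1|_p < 1. For every continuous function f : ℤ_p → ℚ_p, the sequence N ↦ ((1+q)/(1+q^{p^N})) ∑_{x=0}^{p^N−1} (−q)^x f(x) converges in ℚ_p to a limit I_{−q}(f); moreover, writing f₁(x) = f(x+1), one has q·I_{−q}(f₁) + I_{−q}(f) = [2]_q·f(0), where [2]_q = 1+q. -/

import Mathlib

open Finset Filter

section Aux

variable {p : ℕ} [hpp : Fact (Nat.Prime p)]

private lemma aux_norm_q_le {q : ℚ_[p]} (hq : ‖q - 1‖ < 1) : ‖q‖ ≤ 1 := by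
  have h : q = (q - 1) + 1 := by ring
  calc ‖q‖ = ‖(q - 1) + 1‖ := by rw [← h]
    _ ≤ max ‖q - 1‖ ‖(1 : ℚ_[p])‖ := Padic.nonarchimedean _ _
    _ ≤ 1 := by rw [norm_one]; exact max_le hq.le le_rfl

private lemma aux_norm_sub_le_inv {q : ℚ_[p]} (hq : ‖q - 1‖ < 1) : ‖q - 1‖ ≤ (p : ℝ)⁻¹ := by
  have := (Padic.norm_lt_pow_iff_norm_le_pow_sub_one (q - 1) 0).mp (by simpa using hq)
  simpa [zpow_neg] using this

private lemma aux_norm_geom_le {q : ℚ_[p]} (hq : ‖q‖ ≤ 1) (n : ℕ) :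
    ‖∑ i ∈ Finset.range n, q ^ i‖ ≤ 1 :=
  IsUltrametricDist.norm_sum_le_of_forall_le_of_nonneg zero_le_one
    (fun i _ => by rw [norm_pow]; exact pow_le_one₀ (norm_nonneg q) hq)

private lemma aux_norm_pow_sub_one {q : ℚ_[p]} (hq : ‖q - 1‖ < 1) (m : ℕ) :
    ‖q ^ m - 1‖ ≤ ‖q - 1‖ := by
  rw [← geom_sum_mul, norm_mul]
  exact mul_le_of_le_one_left (norm_nonneg _) (aux_norm_geom_le (aux_norm_q_le hq) m)

private lemma aux_contraction {q : ℚ_[p]} (hq : ‖q - 1‖ < 1) :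
    ‖q ^ p - 1‖ ≤ (p : ℝ)⁻¹ * ‖q - 1‖ := by
  have hple : ‖q - 1‖ ≤ (p : ℝ)⁻¹ := aux_norm_sub_le_inv hq
  rw [← geom_sum_mul, norm_mul]
  refine mul_le_mul_of_nonneg_right ?_ (norm_nonneg (q - 1))
  have hsplit : (∑ i ∈ Finset.range p, q ^ i)
      = (∑ i ∈ Finset.range p, (q ^ i - 1)) + (p : ℚ_[p]) := by
    rw [Finset.sum_sub_distrib]
    simp [Finset.card_range]
  rw [hsplit]
  calc ‖(∑ i ∈ Finset.range p, (q ^ i - 1)) + (p : ℚ_[p])‖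
      ≤ max ‖∑ i ∈ Finset.range p, (q ^ i - 1)‖ ‖(p : ℚ_[p])‖ := Padic.nonarchimedean _ _
    _ ≤ (p : ℝ)⁻¹ := by
        refine max_le ?_ (le_of_eq (Padic.norm_p))
        refine IsUltrametricDist.norm_sum_le_of_forall_le_of_nonneg (by positivity) ?_
        exact fun i _ => (aux_norm_pow_sub_one hq i).trans hple

private lemma aux_norm_pow_pow {q : ℚ_[p]} (hq : ‖q - 1‖ < 1) (N : ℕ) :
    ‖q ^ p ^ N - 1‖ ≤ ((p : ℝ)⁻¹) ^ N * ‖q - 1‖ := by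
  induction N with
  | zero => simp
  | succ n ih =>
    have hinvle : ((p : ℝ)⁻¹) ^ n ≤ 1 := by
      apply pow_le_one₀ (by positivity)
      rw [inv_le_one_iff₀]; right
      exact_mod_cast hpp.out.one_lt.le
    have h1 : ‖q ^ p ^ n - 1‖ < 1 :=
      lt_of_le_of_lt (ih.trans (by nlinarith [norm_nonneg (q - 1)])) hq
    have hinv0 : (0:ℝ) ≤ (p : ℝ)⁻¹ := by positivity
    calc ‖q ^ p ^ (n + 1) - 1‖ = ‖(q ^ p ^ n) ^ p - 1‖ := by
          rw [← pow_mul, pow_succ]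
      _ ≤ (p : ℝ)⁻¹ * ‖q ^ p ^ n - 1‖ := aux_contraction h1
      _ ≤ (p : ℝ)⁻¹ * (((p : ℝ)⁻¹) ^ n * ‖q - 1‖) := by
          exact mul_le_mul_of_nonneg_left ih hinv0
      _ = ((p : ℝ)⁻¹) ^ (n + 1) * ‖q - 1‖ := by ring

private lemma aux_inv_lt_one : ((p : ℝ))⁻¹ < 1 := by
  rw [inv_lt_one_iff₀]; right
  exact_mod_cast hpp.out.one_lt

private lemma aux_tendsto_qpow {q : ℚ_[p]} (hq : ‖q - 1‖ < 1) :
    Tendsto (fun N : ℕ => q ^ p ^ N) atTop (nhds 1) := by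
  rw [tendsto_iff_norm_sub_tendsto_zero]
  refine squeeze_zero (fun N => norm_nonneg _) (fun N => aux_norm_pow_pow hq N) ?_
  have h0 : Tendsto (fun N : ℕ => ((p:ℝ)⁻¹) ^ N) atTop (nhds 0) :=
    tendsto_pow_atTop_nhds_zero_of_lt_one (by positivity) aux_inv_lt_one
  simpa using h0.mul_const ‖q - 1‖

private lemma aux_sum_range_mul {A : Type*} [AddCommMonoid A] (f : ℕ → A) (b a : ℕ) :
    ∑ x ∈ Finset.range (b * a), f x
      = ∑ j ∈ Finset.range b, ∑ i ∈ Finset.range a, f (j * a + i) := by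
  induction b with
  | zero => simp
  | succ n ih =>
    rw [Nat.succ_mul, Finset.sum_range_add, ih, Finset.sum_range_succ]

private lemma aux_cauchy_of_step {u : ℕ → ℚ_[p]}
    (h : ∀ ε > (0:ℝ), ∃ N₀ : ℕ, ∀ N ≥ N₀, ‖u (N + 1) - u N‖ ≤ ε) : CauchySeq u := by
  rw [Metric.cauchySeq_iff]
  intro ε hε
  obtain ⟨N₀, hN₀⟩ := h (ε / 2) (by positivity)
  refine ⟨N₀, fun m hm n hn => ?_⟩
  have key : ∀ a b : ℕ, N₀ ≤ a → a ≤ b → ‖u b - u a‖ ≤ ε / 2 := by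
    intro a b ha hab
    have htel : u b - u a = ∑ k ∈ Finset.Ico a b, (u (k + 1) - u k) := by
      rw [Finset.sum_Ico_eq_sub _ hab, Finset.sum_range_sub, Finset.sum_range_sub]
      ring
    rw [htel]
    refine IsUltrametricDist.norm_sum_le_of_forall_le_of_nonneg (by positivity) ?_
    intro k hk
    exact hN₀ k (ha.trans (Finset.mem_Ico.mp hk).1)
  rw [dist_eq_norm]
  rcases le_total n m with h' | h'
  · exact lt_of_le_of_lt (key n m hn h') (by linarith)
  · calc ‖u m - u n‖ = ‖u n - u m‖ := by rw [← norm_neg]; ring_nf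
      _ ≤ ε / 2 := key m n hm h'
    linarith

private lemma aux_cauchy_T {q : ℚ_[p]} (hq : ‖q - 1‖ < 1) (hodd : Odd p)
    {g : ℤ_[p] → ℚ_[p]} (hg : Continuous g) :
    CauchySeq (fun N : ℕ => ∑ x ∈ Finset.range (p ^ N), (-q) ^ x * g (x : ℤ_[p])) := by
  set T : ℕ → ℚ_[p] := fun N => ∑ x ∈ Finset.range (p ^ N), (-q) ^ x * g (x : ℤ_[p]) with hT
  obtain ⟨z₀, -, hz₀⟩ := isCompact_univ.exists_isMaxOn ⟨0, trivial⟩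
    ((continuous_norm.comp hg).continuousOn)
  set C : ℝ := max ‖g z₀‖ 1 with hC
  have hC1 : (1:ℝ) ≤ C := le_max_right _ _
  have hC0 : (0:ℝ) < C := lt_of_lt_of_le one_pos hC1
  have hgC : ∀ z, ‖g z‖ ≤ C := fun z => le_trans (hz₀ (Set.mem_univ z)) (le_max_left _ _)
  have hucont := Metric.uniformContinuous_iff.mp (CompactSpace.uniformContinuous_of_continuous hg)
  apply aux_cauchy_of_step
  intro ε hε
  obtain ⟨δ, hδ0, hδ⟩ := hucont ε hε
  have htend : Tendsto (fun N : ℕ => ((p:ℝ)⁻¹) ^ N) atTop (nhds 0) :=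
    tendsto_pow_atTop_nhds_zero_of_lt_one (by positivity) aux_inv_lt_one
  have hmin : (0:ℝ) < min δ (ε / C) := lt_min hδ0 (by positivity)
  obtain ⟨N₀, hN₀⟩ := Filter.eventually_atTop.mp (htend.eventually (gt_mem_nhds hmin))
  refine ⟨N₀, fun N hN => ?_⟩
  have hsmall : ((p:ℝ)⁻¹) ^ N < min δ (ε / C) := hN₀ N hN
  have hM_odd : Odd (p ^ N) := hodd.pow
  have hsplit : T (N+1) - T N = ∑ j ∈ Finset.range p, ∑ i ∈ Finset.range (p^N),
      ((-q)^(j*p^N+i) * g ((j*p^N+i : ℕ) : ℤ_[p])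
        - (-1:ℚ_[p])^j * ((-q)^i * g (i : ℤ_[p]))) := by
    have e1 : T (N+1) = ∑ j ∈ Finset.range p, ∑ i ∈ Finset.range (p^N),
        (-q)^(j*p^N+i) * g ((j*p^N+i : ℕ) : ℤ_[p]) := by
      rw [hT]
      simp only
      rw [pow_succ', aux_sum_range_mul]
    have e2 : T N = ∑ j ∈ Finset.range p, (-1:ℚ_[p])^j
        * ∑ i ∈ Finset.range (p^N), (-q)^i * g (i : ℤ_[p]) := by
      rw [hT]
      simp only
      rw [← Finset.sum_mul, neg_one_geom_sum, if_neg (Nat.not_even_iff_odd.mpr hodd), one_mul]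
    rw [e1, e2, ← Finset.sum_sub_distrib]
    refine Finset.sum_congr rfl fun j _ => ?_
    rw [Finset.mul_sum, ← Finset.sum_sub_distrib]
  rw [hsplit]
  refine IsUltrametricDist.norm_sum_le_of_forall_le_of_nonneg hε.le fun j hj => ?_
  refine IsUltrametricDist.norm_sum_le_of_forall_le_of_nonneg hε.le fun i hi => ?_
  have efact : (-q)^(j*p^N+i) * g ((j*p^N+i : ℕ) : ℤ_[p])
      - (-1:ℚ_[p])^j * ((-q)^i * g (i : ℤ_[p]))
      = (-1:ℚ_[p])^j * (-q)^i
        * ((q^(p^N))^j * g ((j*p^N+i : ℕ) : ℤ_[p]) - g (i : ℤ_[p])) := by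
    rw [pow_add, mul_comm j (p^N), pow_mul, hM_odd.neg_pow, neg_pow]
    ring
  rw [efact, norm_mul, norm_mul, norm_pow, norm_pow, norm_neg, norm_neg, norm_one,
    one_pow, one_mul]
  have hqi : ‖q‖ ^ i ≤ 1 := pow_le_one₀ (norm_nonneg q) (aux_norm_q_le hq)
  have hinner : ‖(q^(p^N))^j * g ((j*p^N+i : ℕ) : ℤ_[p]) - g (i : ℤ_[p])‖ ≤ ε := by
    have hdecomp : (q^(p^N))^j * g ((j*p^N+i : ℕ) : ℤ_[p]) - g (i : ℤ_[p])
        = ((q^(p^N))^j - 1) * g ((j*p^N+i : ℕ) : ℤ_[p])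
          + (g ((j*p^N+i : ℕ) : ℤ_[p]) - g (i : ℤ_[p])) := by ring
    rw [hdecomp]
    refine le_trans (Padic.nonarchimedean _ _) (max_le ?_ ?_)
    · -- first branch
      have hqN1 : ‖q ^ p ^ N - 1‖ < 1 := by
        refine lt_of_le_of_lt ((aux_norm_pow_pow hq N).trans ?_) hq
        nlinarith [norm_nonneg (q - 1),
          pow_le_one₀ (by positivity : (0:ℝ) ≤ (p:ℝ)⁻¹) aux_inv_lt_one.le (n := N)]
      have h1 : ‖(q^(p^N))^j - 1‖ ≤ ((p:ℝ)⁻¹) ^ N := by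
        refine (aux_norm_pow_sub_one hqN1 j).trans ((aux_norm_pow_pow hq N).trans ?_)
        nlinarith [pow_nonneg (by positivity : (0:ℝ) ≤ (p:ℝ)⁻¹) N, norm_nonneg (q-1)]
      rw [norm_mul]
      calc ‖(q^(p^N))^j - 1‖ * ‖g ((j*p^N+i : ℕ) : ℤ_[p])‖
          ≤ ((p:ℝ)⁻¹) ^ N * C := by
            exact mul_le_mul h1 (hgC _) (norm_nonneg _) (by positivity)
        _ ≤ (ε / C) * C := by
            have : ((p:ℝ)⁻¹) ^ N ≤ ε / C := le_of_lt (lt_of_lt_of_le hsmall (min_le_right _ _))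
            exact mul_le_mul_of_nonneg_right this hC0.le
        _ = ε := div_mul_cancel₀ ε hC0.ne'
    · -- second branch : uniform continuity
      have hdist : dist ((j*p^N+i : ℕ) : ℤ_[p]) ((i : ℕ) : ℤ_[p]) < δ := by
        rw [dist_eq_norm]
        have hcast : ((j*p^N+i : ℕ) : ℤ_[p]) - ((i : ℕ) : ℤ_[p])
            = (j : ℤ_[p]) * (p : ℤ_[p]) ^ N := by push_cast; ring
        rw [hcast]
        calc ‖(j : ℤ_[p]) * (p : ℤ_[p]) ^ N‖ ≤ ‖(p : ℤ_[p]) ^ N‖ := by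
              rw [norm_mul]
              exact mul_le_of_le_one_left (norm_nonneg _) (PadicInt.norm_le_one _)
          _ = ((p:ℝ)⁻¹) ^ N := by rw [norm_pow, PadicInt.norm_p]
          _ < δ := lt_of_lt_of_le hsmall (min_le_left _ _)
      have := hδ hdist
      rw [dist_eq_norm] at this
      exact this.le
  calc ‖q‖ ^ i * ‖(q^(p^N))^j * g ((j*p^N+i : ℕ) : ℤ_[p]) - g (i : ℤ_[p])‖
      ≤ 1 * ε := mul_le_mul hqi hinner (norm_nonneg _) zero_le_one
    _ = ε := one_mul ε

end Aux

/-- The fermionic `p`-adic `q`-integral relation: for `q ∈ ℚ_p` with `|q-1|_p < 1` and `f`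
continuous on `ℤ_p`, the Riemann sums `((1+q)/(1+q^{p^N})) ∑_{x<p^N} (-q)^x f(x)` converge
(both for `f₁(x) = f(x+1)` and for `f`), and the limits satisfy
`q I_{-q}(f₁) + I_{-q}(f) = [2]_q f(0)`. -/
theorem fermionic_integral_relation (p : ℕ) [Fact (Nat.Prime p)] (hp : Odd p)
    (q : ℚ_[p]) (hq : ‖q - 1‖ < 1) (f : ℤ_[p] → ℚ_[p]) (hf : Continuous f) :
    ∃ I₁ I₀ : ℚ_[p],
      Filter.Tendsto
        (fun N : ℕ => ((1 + q) / (1 + q ^ p ^ N)) *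
          ∑ x ∈ Finset.range (p ^ N), (-q) ^ x * f ((x : ℤ_[p]) + 1))
        Filter.atTop (nhds I₁) ∧
      Filter.Tendsto
        (fun N : ℕ => ((1 + q) / (1 + q ^ p ^ N)) *
          ∑ x ∈ Finset.range (p ^ N), (-q) ^ x * f (x : ℤ_[p]))
        Filter.atTop (nhds I₀) ∧
      q * I₁ + I₀ = (1 + q) * f 0 := by
  classical
  have hg₁c : Continuous (fun z : ℤ_[p] => f (z + 1)) :=
    hf.comp (continuous_id.add continuous_const)
  obtain ⟨t₁, ht₁⟩ := cauchySeq_tendsto_of_complete (aux_cauchy_T hq hp hg₁c)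
  obtain ⟨t₀, ht₀⟩ := cauchySeq_tendsto_of_complete (aux_cauchy_T hq hp hf)
  have hden : Tendsto (fun N : ℕ => (1 + q) / (1 + q ^ p ^ N)) atTop (nhds ((1 + q) / 2)) := by
    have h2 : Tendsto (fun N : ℕ => 1 + q ^ p ^ N) atTop (nhds (1 + 1)) :=
      (aux_tendsto_qpow hq).const_add 1
    have h21 : (1 : ℚ_[p]) + 1 = 2 := by norm_num
    rw [h21] at h2
    exact tendsto_const_nhds.div h2 two_ne_zero
  have hS₁ : Tendsto
      (fun N : ℕ => ((1 + q) / (1 + q ^ p ^ N)) *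
        ∑ x ∈ Finset.range (p ^ N), (-q) ^ x * f ((x : ℤ_[p]) + 1))
      atTop (nhds ((1 + q) / 2 * t₁)) := hden.mul ht₁
  have hS₀ : Tendsto
      (fun N : ℕ => ((1 + q) / (1 + q ^ p ^ N)) *
        ∑ x ∈ Finset.range (p ^ N), (-q) ^ x * f (x : ℤ_[p]))
      atTop (nhds ((1 + q) / 2 * t₀)) := hden.mul ht₀
  refine ⟨(1 + q) / 2 * t₁, (1 + q) / 2 * t₀, hS₁, hS₀, ?_⟩
  -- the relation, via uniqueness of limits
  have key : ∀ N : ℕ,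
      q * (((1 + q) / (1 + q ^ p ^ N)) *
          ∑ x ∈ Finset.range (p ^ N), (-q) ^ x * f ((x : ℤ_[p]) + 1))
        + ((1 + q) / (1 + q ^ p ^ N)) *
          ∑ x ∈ Finset.range (p ^ N), (-q) ^ x * f (x : ℤ_[p])
      = ((1 + q) / (1 + q ^ p ^ N)) *
          (f 0 + q ^ p ^ N * f ((p ^ N : ℕ) : ℤ_[p])) := by
    intro N
    set F : ℕ → ℚ_[p] := fun x => (-q) ^ x * f ((x : ℕ) : ℤ_[p]) with hF
    have h1 : ∑ x ∈ Finset.range (p ^ N),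
        ((-q) ^ x * f ((x : ℤ_[p])) + q * ((-q) ^ x * f ((x : ℤ_[p]) + 1)))
        = F 0 - F (p ^ N) := by
      rw [← Finset.sum_range_sub' F (p ^ N)]
      refine Finset.sum_congr rfl fun x _ => ?_
      simp only [hF, pow_succ, Nat.cast_add, Nat.cast_one]
      ring
    have hF0 : F 0 = f 0 := by simp [hF]
    have hFM : F (p ^ N) = -(q ^ p ^ N) * f ((p ^ N : ℕ) : ℤ_[p]) := by
      rw [hF]
      simp only
      rw [(hp.pow : Odd (p ^ N)).neg_pow]
    have htel : q * (∑ x ∈ Finset.range (p ^ N), (-q) ^ x * f ((x : ℤ_[p]) + 1))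
        + ∑ x ∈ Finset.range (p ^ N), (-q) ^ x * f (x : ℤ_[p])
        = f 0 + q ^ p ^ N * f ((p ^ N : ℕ) : ℤ_[p]) := by
      rw [Finset.mul_sum, ← Finset.sum_add_distrib]
      calc ∑ x ∈ Finset.range (p ^ N),
            (q * ((-q) ^ x * f ((x : ℤ_[p]) + 1)) + (-q) ^ x * f (x : ℤ_[p]))
          = ∑ x ∈ Finset.range (p ^ N),
            ((-q) ^ x * f ((x : ℤ_[p])) + q * ((-q) ^ x * f ((x : ℤ_[p]) + 1))) := by
            refine Finset.sum_congr rfl fun x _ => ?_; ring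
        _ = F 0 - F (p ^ N) := h1
        _ = f 0 + q ^ p ^ N * f ((p ^ N : ℕ) : ℤ_[p]) := by rw [hF0, hFM]; ring
    calc q * (((1 + q) / (1 + q ^ p ^ N)) *
          ∑ x ∈ Finset.range (p ^ N), (-q) ^ x * f ((x : ℤ_[p]) + 1))
        + ((1 + q) / (1 + q ^ p ^ N)) *
          ∑ x ∈ Finset.range (p ^ N), (-q) ^ x * f (x : ℤ_[p])
        = ((1 + q) / (1 + q ^ p ^ N)) *
          (q * (∑ x ∈ Finset.range (p ^ N), (-q) ^ x * f ((x : ℤ_[p]) + 1))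
            + ∑ x ∈ Finset.range (p ^ N), (-q) ^ x * f (x : ℤ_[p])) := by ring
      _ = ((1 + q) / (1 + q ^ p ^ N)) * (f 0 + q ^ p ^ N * f ((p ^ N : ℕ) : ℤ_[p])) := by
          rw [htel]
  have hE : Tendsto
      (fun N : ℕ => q * (((1 + q) / (1 + q ^ p ^ N)) *
          ∑ x ∈ Finset.range (p ^ N), (-q) ^ x * f ((x : ℤ_[p]) + 1))
        + ((1 + q) / (1 + q ^ p ^ N)) *
          ∑ x ∈ Finset.range (p ^ N), (-q) ^ x * f (x : ℤ_[p]))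
      atTop (nhds (q * ((1 + q) / 2 * t₁) + (1 + q) / 2 * t₀)) :=
    (tendsto_const_nhds.mul hS₁).add hS₀
  have hp0 : Tendsto (fun N : ℕ => ((p ^ N : ℕ) : ℤ_[p])) atTop (nhds 0) := by
    have hcast : (fun N : ℕ => ((p ^ N : ℕ) : ℤ_[p])) = fun N : ℕ => (p : ℤ_[p]) ^ N := by
      funext N; push_cast; ring
    rw [hcast]
    apply tendsto_pow_atTop_nhds_zero_of_norm_lt_one
    rw [PadicInt.norm_p]
    exact aux_inv_lt_one
  have hfp : Tendsto (fun N : ℕ => f ((p ^ N : ℕ) : ℤ_[p])) atTop (nhds (f 0)) :=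
    (hf.tendsto 0).comp hp0
  have hE' : Tendsto
      (fun N : ℕ => ((1 + q) / (1 + q ^ p ^ N)) *
          (f 0 + q ^ p ^ N * f ((p ^ N : ℕ) : ℤ_[p])))
      atTop (nhds ((1 + q) / 2 * (f 0 + 1 * f 0))) :=
    hden.mul (tendsto_const_nhds.add ((aux_tendsto_qpow hq).mul hfp))
  rw [funext key] at hE
  have := tendsto_nhds_unique hE hE'
  rw [this]
  have h2 : (2 : ℚ_[p]) ≠ 0 := two_ne_zero
  field_simp
  ring
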